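/- Let Q be an acyclic quiver of type D_n and d ∈ Φ₊. If e satisfies Tran's conditions with respect to (Q,d), and j is a vertex with e_j > 0 such that e_j > e_i for every arrow i → j, then e′ = e − δ_j satisfies 0 ≤ e′ ≤ d and every arrow of Q is acceptable with respect to (e′, d). (That is, the acceptability conditions are preserved under decrementing at such a 'sink-maximal' vertex.) -/
import Mathlib


/-- If `e` satisfies `0 ≤ e ≤ d` and every arrow of `Q` is acceptable with respect to
`(e,d)`, and `j` is a vertex with `e_j > 0` such that `e_j > e_i` for every arrow `i → j`,
then `e' = e − δ_j` still satisfies `0 ≤ e' ≤ d` and every arrow of `Q` is acceptable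
with respect to `(e', d)`. -/
theorem acceptability_preserved_under_decrement (arrow : ℕ → ℕ → Prop) (d e : ℕ → ℤ)
    (h1 : ∀ i, 0 ≤ e i ∧ e i ≤ d i)
    (h2 : ∀ i j, arrow i j → e i - e j ≤ max (d i - d j) 0)
    (j : ℕ) (hj : 0 < e j) (hmax : ∀ i, arrow i j → e i < e j) :
    (∀ k, 0 ≤ e k - (if k = j then 1 else 0) ∧ e k - (if k = j then 1 else 0) ≤ d k) ∧
    (∀ i k, arrow i k →
      (e i - (if i = j then 1 else 0)) - (e k - (if k = j then 1 else 0)) ≤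
        max (d i - d k) 0) := by
  constructor
  · intro k
    rcases h1 k with ⟨hk0, hkd⟩
    by_cases hk : k = j
    · subst hk; simp; omega
    · simp [hk]; omega
  · intro i k hik
    have h := h2 i k hik
    by_cases hi : i = j <;> by_cases hk : k = j
    · subst hi; subst hk; simp
    · subst hi; simp [hk]; omega
    · subst hk; have := hmax i hik; simp [hi]; omega
    · simp [hi, hk]; omega
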